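/- arXiv:1207.1245 — 4 statements merged into one kernel-verified Lean document; each statement's English description precedes it below -/
import Mathlib

section
/- Let u > 0 and Φ₁(z) = Φ(A_{u,1}; z). Then the derivative Φ₁′(z) < 1 for all z ∈ [0,1] if and only if u < √3. -/
noncomputable def xu (u : ℝ) : ℝ := 2 / (1 + Real.sqrt (1 + 8 * u ^ 2))

noncomputable def Phi1 (u z : ℝ) : ℝ := xu u / (1 - u ^ 2 * (xu u) ^ 2 * (z + 1))

lemma xu_facts (u : ℝ) (hu : 0 < u) :
    0 < xu u ∧ xu u < 1 ∧ u ^ 2 * (xu u) ^ 2 = (1 - xu u) / 2 := by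
  have hsnn : (0:ℝ) ≤ Real.sqrt (1 + 8 * u ^ 2) := Real.sqrt_nonneg _
  have hs2 : Real.sqrt (1 + 8 * u ^ 2) ^ 2 = 1 + 8 * u ^ 2 :=
    Real.sq_sqrt (by positivity)
  have hs1 : 1 < Real.sqrt (1 + 8 * u ^ 2) := by nlinarith
  set s := Real.sqrt (1 + 8 * u ^ 2) with hs
  have hden : (0:ℝ) < 1 + s := by linarith
  have hx : xu u = 2 / (1 + s) := rfl
  refine ⟨by rw [hx]; positivity, ?_, ?_⟩
  · rw [hx, div_lt_one hden]; linarith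
  · rw [hx]; field_simp; nlinarith

lemma deriv_Phi1 (u : ℝ) (hu : 0 < u) (z : ℝ) (hz : z ∈ Set.Icc (0:ℝ) 1) :
    deriv (Phi1 u) z = u ^ 2 * (xu u) ^ 3 / (1 - u ^ 2 * (xu u) ^ 2 * (z + 1)) ^ 2 := by
  obtain ⟨hx0, hx1, hxe⟩ := xu_facts u hu
  set x := xu u
  set c := u ^ 2 * x ^ 2 with hc
  obtain ⟨hz0, hz1⟩ := hz
  have hg : (0:ℝ) < 1 - c * (z + 1) := by
    simp only [hc, hxe]; nlinarith
  have h1 : HasDerivAt (fun z : ℝ => 1 - c * (z + 1)) (-c) z := by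
    simpa using ((hasDerivAt_id z).add_const 1).const_mul c |>.const_sub 1
  have h2 : HasDerivAt (fun z : ℝ => x / (1 - c * (z + 1)))
      ((0 * (1 - c * (z + 1)) - x * (-c)) / (1 - c * (z + 1)) ^ 2) z :=
    (hasDerivAt_const z x).div h1 (ne_of_gt hg)
  have h3 : deriv (Phi1 u) z = (0 * (1 - c * (z + 1)) - x * (-c)) / (1 - c * (z + 1)) ^ 2 := by
    have : Phi1 u = fun z : ℝ => x / (1 - c * (z + 1)) := rfl
    rw [this]; exact h2.deriv
  rw [h3, hc]; ring_nf

theorem stmt_6 (u : ℝ) (hu : 0 < u) :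
    (∀ z ∈ Set.Icc (0 : ℝ) 1, deriv (Phi1 u) z < 1) ↔ u < Real.sqrt 3 := by
  obtain ⟨hx0, hx1, hxe⟩ := xu_facts u hu
  set x := xu u
  have h3 : Real.sqrt 3 ^ 2 = 3 := Real.sq_sqrt (by norm_num)
  have h3p : (0:ℝ) < Real.sqrt 3 := Real.sqrt_pos.mpr (by norm_num)
  constructor
  · intro h
    have h1 := h 1 (by norm_num)
    rw [deriv_Phi1 u hu 1 (by norm_num)] at h1
    have hg : 1 - u ^ 2 * x ^ 2 * (1 + 1) = x := by rw [hxe]; ring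
    rw [hg] at h1
    have hlt : u ^ 2 * x ^ 3 < x ^ 2 := by
      rwa [div_lt_one (by positivity)] at h1
    -- u^2 x^2 = (1-x)/2, so u^2 x^3 = (1-x)x/2 < x^2 gives x > 1/3
    have hx3 : 1 / 3 < x := by nlinarith [hxe]
    have hu2 : u ^ 2 < 3 := by nlinarith [hxe]
    nlinarith
  · intro h
    have hu2 : u ^ 2 < 3 := by nlinarith
    have hx3 : 1 / 3 < x := by nlinarith [hxe, sq_nonneg (x - 1/3), sq_nonneg x]
    intro z hz
    rw [deriv_Phi1 u hu z hz]
    obtain ⟨hz0, hz1⟩ := hz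
    have hg : x ≤ 1 - u ^ 2 * x ^ 2 * (z + 1) := by rw [hxe]; nlinarith
    have hg0 : (0:ℝ) < 1 - u ^ 2 * x ^ 2 * (z + 1) := by linarith
    rw [div_lt_one (by positivity)]
    have : u ^ 2 * x ^ 3 < x ^ 2 := by nlinarith [hxe]
    nlinarith [sq_nonneg (1 - u ^ 2 * x ^ 2 * (z + 1) - x)]
end

section
/- If u > √3, then there exists z₀ ∈ (0,1) such that the derivative of Φ₁(z) = Φ(A_{u,1}; z) satisfies Φ₁′(z) < 1 for z < z₀ and Φ₁′(z) > 1 for z₀ < z ≤ 1. -/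
theorem stmt_8 (u : ℝ) (hu : Real.sqrt 3 < u) :
    ∃ z₀ ∈ Set.Ioo (0 : ℝ) 1,
      (∀ z ∈ Set.Icc (0 : ℝ) 1, z < z₀ → deriv (Phi1 u) z < 1) ∧
      (∀ z ∈ Set.Icc (0 : ℝ) 1, z₀ < z → 1 < deriv (Phi1 u) z) := by
  have hu0 : 0 < u := lt_of_le_of_lt (Real.sqrt_nonneg 3) hu
  have hu3 : 3 < u ^ 2 := by
    nlinarith [Real.sq_sqrt (by norm_num : (0:ℝ) ≤ 3), Real.sqrt_nonneg 3]
  set s := Real.sqrt (1 + 8 * u ^ 2) with hsdef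
  have hs2 : s ^ 2 = 1 + 8 * u ^ 2 := Real.sq_sqrt (by positivity)
  have hs0 : 0 ≤ s := Real.sqrt_nonneg _
  have hs5 : 5 < s := by nlinarith
  set x := xu u with hxdef
  have hxs : x * (1 + s) = 2 := by
    rw [hxdef, xu]; field_simp; rfl
  have hx0 : 0 < x := by
    rw [hxdef, xu]; positivity
  have hx3 : x < 1 / 3 := by nlinarith
  have hkey : 2 * u ^ 2 * x ^ 2 = 1 - x := by
    have h1 : (1:ℝ) + s ≠ 0 := by positivity
    have hx : x = 2 / (1 + s) := rfl
    rw [hx]; field_simp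
    nlinarith [hs2]
  set a := u ^ 2 * x ^ 2 with hadef
  have ha : 2 * a = 1 - x := by rw [hadef]; linarith [hkey]
  have ha0 : 0 < a := by positivity
  have hax : x < a := by linarith
  set sax := Real.sqrt (a * x) with hsaxdef
  have hsax0 : 0 < sax := Real.sqrt_pos.mpr (by positivity)
  have hsax2 : sax ^ 2 = a * x := Real.sq_sqrt (by positivity)
  set z₀ := (1 - sax) / a - 1 with hz₀def
  have hz₀eq : 1 - a * (z₀ + 1) = sax := by
    rw [hz₀def]; field_simp; ring
  clear_value sax z₀
  -- derivative formula
  have hd : ∀ z : ℝ, 1 - a * (z + 1) ≠ 0 →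
      deriv (Phi1 u) z = a * x / (1 - a * (z + 1)) ^ 2 := by
    intro z hz
    have h1 : HasDerivAt (fun z : ℝ => 1 - a * (z + 1)) (-a) z := by
      have := ((hasDerivAt_id z).add_const 1).const_mul a
      simpa using this.const_sub 1
    have h2 : HasDerivAt (Phi1 u) ((0 * (1 - a * (z + 1)) - x * (-a)) / (1 - a * (z+1)) ^ 2) z := by
      have := (hasDerivAt_const z x).div h1 hz
      exact this
    rw [h2.deriv]; ring
  have hdpos : ∀ z ∈ Set.Icc (0:ℝ) 1, x ≤ 1 - a * (z + 1) := by
    intro z hz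
    obtain ⟨hz1, hz2⟩ := hz
    nlinarith
  clear_value s x a
  refine ⟨z₀, ⟨?_, ?_⟩, ?_, ?_⟩
  · -- 0 < z₀  ⟺  sax < 1 - a
    have h1 : sax < 1 - a := by nlinarith
    rw [hz₀def]
    rw [lt_sub_iff_add_lt, zero_add, lt_div_iff₀ ha0]
    linarith
  · -- z₀ < 1 ⟺ x < sax
    have h1 : x < sax := by nlinarith
    rw [hz₀def]
    rw [sub_lt_iff_lt_add, div_lt_iff₀ ha0]
    linarith
  · intro z hz hlt
    have hdz := hdpos z hz
    have hden : (0:ℝ) < 1 - a * (z + 1) := lt_of_lt_of_le hx0 hdz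
    rw [hd z (ne_of_gt hden)]
    rw [div_lt_one (by positivity)]
    have h3 : sax < 1 - a * (z + 1) := by
      rw [← hz₀eq]
      nlinarith [mul_lt_mul_of_pos_left hlt ha0]
    have h5 : sax ^ 2 < (1 - a * (z + 1)) ^ 2 := by
      rw [sq, sq]; exact mul_self_lt_mul_self hsax0.le h3
    linarith [hsax2, h5]
  · intro z hz hlt
    have hdz := hdpos z hz
    have hden : (0:ℝ) < 1 - a * (z + 1) := lt_of_lt_of_le hx0 hdz
    rw [hd z (ne_of_gt hden)]
    rw [lt_div_iff₀ (by positivity)]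
    have h3 : 1 - a * (z + 1) < sax := by
      rw [← hz₀eq]
      nlinarith [mul_lt_mul_of_pos_left hlt ha0]
    have h5 : (1 - a * (z + 1)) ^ 2 < sax ^ 2 := by
      rw [sq, sq]; exact mul_self_lt_mul_self hden.le h3
    linarith [hsax2, h5]
end

section
/- Let u > √3 and Φ₁(z) = x_u/(1 - u²x_u²(z+1)) on [0,1], where x_u = 2/(1+√(1+8u²)). Then there exists z₁ ∈ (0,1) with Φ₁(z₁) = z₁, Φ₁(z) > z for z ∈ (0,z₁), and Φ₁(z) < z for z ∈ (z₁,1). -/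
theorem stmt_15 (u : ℝ) (hu : Real.sqrt 3 < u) :
    ∃ z₁ ∈ Set.Ioo (0 : ℝ) 1, Phi1 u z₁ = z₁ ∧
      (∀ z ∈ Set.Ioo (0 : ℝ) z₁, z < Phi1 u z) ∧
      (∀ z ∈ Set.Ioo z₁ (1 : ℝ), Phi1 u z < z) := by
  have h3 : (Real.sqrt 3) ^ 2 = 3 := Real.sq_sqrt (by norm_num)
  have hu2 : 3 < u ^ 2 := by nlinarith [Real.sqrt_nonneg 3]
  have hs : Real.sqrt (1 + 8 * u ^ 2) ^ 2 = 1 + 8 * u ^ 2 :=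
    Real.sq_sqrt (by nlinarith)
  have hsnn : 0 ≤ Real.sqrt (1 + 8 * u ^ 2) := Real.sqrt_nonneg _
  have hs5 : 5 < Real.sqrt (1 + 8 * u ^ 2) := by nlinarith
  set x := xu u with hx
  have hxval : x = 2 / (1 + Real.sqrt (1 + 8 * u ^ 2)) := rfl
  have h1s : 0 < 1 + Real.sqrt (1 + 8 * u ^ 2) := by linarith
  have hx0 : 0 < x := by rw [hxval]; positivity
  have hx3 : x < 1 / 3 := by rw [hxval, div_lt_iff₀ h1s]; linarith
  have hkey : u ^ 2 * x ^ 2 = (1 - x) / 2 := by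
    rw [hxval]; field_simp; nlinarith [hs, Real.sq_sqrt (show (0:ℝ) ≤ 1 + u ^ 2 * 8 by positivity)]
  have hPhi : ∀ z : ℝ, Phi1 u z = x / (1 - (1 - x) / 2 * (z + 1)) := by
    intro z
    unfold Phi1
    rw [← hx, hkey]
  have hxlt1 : x < 1 := by linarith
  set z₁ : ℝ := 2 * x / (1 - x) with hz₁
  have h1x : 0 < 1 - x := by linarith
  have hz₁0 : 0 < z₁ := by positivity
  have hz₁1 : z₁ < 1 := by rw [hz₁, div_lt_one h1x]; linarith
  have hD : ∀ z : ℝ, z ≤ 1 → 0 < 1 - (1 - x) / 2 * (z + 1) := by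
    intro z hz; nlinarith
  refine ⟨z₁, ⟨hz₁0, hz₁1⟩, ?_, ?_, ?_⟩
  · rw [hPhi z₁]
    have hD₁ := hD z₁ hz₁1.le
    rw [div_eq_iff (ne_of_gt hD₁), hz₁]
    field_simp
    ring
  · rintro z ⟨hz0, hzz₁⟩
    rw [hPhi z]
    have hz1 : z < 1 := hzz₁.trans hz₁1
    have hDz := hD z hz1.le
    rw [lt_div_iff₀ hDz]
    have h1 : 0 < 1 - z := by linarith
    have h2 : 0 < 2 * x - (1 - x) * z := by
      rw [hz₁, lt_div_iff₀ h1x] at hzz₁; nlinarith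
    nlinarith [mul_pos h1 h2]
  · rintro z ⟨hz₁z, hz1⟩
    rw [hPhi z]
    have hDz := hD z hz1.le
    rw [div_lt_iff₀ hDz]
    have h1 : 0 < 1 - z := by linarith
    have h2 : 0 < (1 - x) * z - 2 * x := by
      rw [hz₁, div_lt_iff₀ h1x] at hz₁z; nlinarith
    nlinarith [mul_pos h1 h2]
end

section
/- Let u > 0 with u ≠ 1, set x_u = 2/(1+√(1+8u²)), γ_u = 1/Φ(A_{u,0};1) = (1-u²x_u²)/x_u, and let tA_{u,0}, tA_{u,1} be the transposes of A_{u,0} = [[x_u,0],[-u²x_u²,1]] and A_{u,1} = [[0,x_u],[-u²x_u²,1-u²x_u²]]. Then it is NOT the case that Φ(tA_{u,0}; γ_u−2) = γ_u−2 and Φ(tA_{u,1}; γ_u−2) = γ_u−2 both hold; equivalently, the point γ_u−2 is a common fixed point of both transposed Möbius maps if and only if u = 1. -/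
/-- Φ(A;z) = (az+b)/(cz+d). -/
noncomputable def Phi (a b c d z : ℝ) : ℝ := (a * z + b) / (c * z + d)

/-- γ_u = 1/Φ(A_{u,0};1) = (1-u²x_u²)/x_u.  The transposes are
tA_{u,0} = [[x_u, -u²x_u²],[0,1]] and tA_{u,1} = [[0,-u²x_u²],[x_u,1-u²x_u²]]. -/
theorem stmt_17 (u : ℝ) (hu : 0 < u) :
    (let γ := (1 - u ^ 2 * (xu u) ^ 2) / xu u
     Phi (xu u) (-(u ^ 2 * (xu u) ^ 2)) 0 1 (γ - 2) = γ - 2 ∧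
     Phi 0 (-(u ^ 2 * (xu u) ^ 2)) (xu u) (1 - u ^ 2 * (xu u) ^ 2) (γ - 2) = γ - 2)
    ↔ u = 1 := by
  obtain ⟨hx0, hx1, hkey⟩ := xu_facts u hu
  set x := xu u with hxdef
  constructor
  · rintro ⟨h1, -⟩
    simp only [Phi] at h1
    rw [hkey] at h1
    have hxne : x ≠ 0 := ne_of_gt hx0
    -- from h1 deduce x = 1/2
    have hx12 : x = 1 / 2 := by
      field_simp at h1
      have hcub : x * (2 * x - 1) * (x - 1) = 0 := by linear_combination (-(1:ℝ)/2) * h1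
      rcases mul_eq_zero.mp hcub with h | h
      · rcases mul_eq_zero.mp h with h' | h'
        · exact absurd h' hxne
        · linarith
      · linarith
    have hu2 : u ^ 2 = 1 := by
      rw [hx12] at hkey; nlinarith
    nlinarith
  · rintro rfl
    have h9 : Real.sqrt (1 + 8 * (1:ℝ) ^ 2) = 3 := by
      rw [show (1 + 8 * (1:ℝ) ^ 2) = 3 ^ 2 by norm_num, Real.sqrt_sq (by norm_num)]
    have hx : x = 1 / 2 := by
      rw [hxdef, xu, h9]; norm_num
    simp only [Phi, hx]
    norm_num
end
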